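/- arXiv:1811.03839 — 3 statements merged into one kernel-verified Lean document; each statement's English description precedes it below -/
import Mathlib

section
/- Under the stable decomposition assumption with constant C_V > 0 (every v ∈ ℝ^n can be written v = ∑_{j=0}^J R_jᵀ v_j with v_j ∈ ℝ^{n_j} and ∑_{j=0}^J v_jᵀ A_j v_j ≤ C_V vᵀ A v), the additive Schwarz operator satisfies the lower eigenvalue bound ⟨P_ad v, v⟩_A ≥ (1/C_V) ‖v‖_A² for every v ∈ ℝ^n. -/
open Matrix BigOperators

private lemma matrix_cauchy_schwarz {m : ℕ} (B : Matrix (Fin m) (Fin m) ℝ)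
    (hB : B.PosDef) (x y : Fin m → ℝ) :
    (x ⬝ᵥ y) ^ 2 ≤ (x ⬝ᵥ B.mulVec x) * (y ⬝ᵥ B⁻¹.mulVec y) := by
  have hBinv : (B⁻¹).PosDef := hB.inv
  by_cases hy : y = 0
  · simp [hy]
  have hc : 0 < y ⬝ᵥ B⁻¹.mulVec y := by simpa using hBinv.dotProduct_mulVec_pos hy
  set c := y ⬝ᵥ B⁻¹.mulVec y with hcdef
  set t := -(x ⬝ᵥ y) / c with htdef
  set z := B⁻¹.mulVec y with hzdef
  have hBz : B.mulVec z = y := by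
    rw [hzdef, mulVec_mulVec, Matrix.mul_nonsing_inv B hB.det_pos.ne'.isUnit, one_mulVec]
  have hsym : ∀ a b : Fin m → ℝ, a ⬝ᵥ B.mulVec b = b ⬝ᵥ B.mulVec a := by
    intro a b
    rw [Matrix.dotProduct_mulVec, ← Matrix.mulVec_transpose]
    rw [show Bᵀ = B from hB.1]
    exact dotProduct_comm _ _
  have hq : 0 ≤ (x + t • z) ⬝ᵥ B.mulVec (x + t • z) := by
    simpa using hB.posSemidef.dotProduct_mulVec_nonneg (x + t • z)
  have hexp : (x + t • z) ⬝ᵥ B.mulVec (x + t • z)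
      = x ⬝ᵥ B.mulVec x + 2 * t * (x ⬝ᵥ y) + t ^ 2 * c := by
    rw [mulVec_add, mulVec_smul, hBz, dotProduct_add, add_dotProduct,
      add_dotProduct, dotProduct_smul, smul_dotProduct, smul_dotProduct,
      dotProduct_smul]
    have h1 : z ⬝ᵥ B.mulVec x = x ⬝ᵥ y := by rw [hsym z x, hBz]
    have h2 : z ⬝ᵥ y = c := by rw [hcdef, hzdef, dotProduct_comm]
    rw [h1, h2]
    simp only [smul_eq_mul]
    ring
  rw [hexp, htdef] at hq
  have h := hq
  field_simp at h
  nlinarith [h]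

private lemma sum_mulVec' {ι : Type*} (s : Finset ι) {k l : ℕ}
    (M : ι → Matrix (Fin k) (Fin l) ℝ) (v : Fin l → ℝ) :
    (∑ j ∈ s, M j) *ᵥ v = ∑ j ∈ s, M j *ᵥ v := by
  funext i
  simp only [Matrix.mulVec, dotProduct, Finset.sum_apply,
    Matrix.sum_apply, Finset.sum_mul]
  exact Finset.sum_comm

private lemma sum_dotProduct' {ι : Type*} (s : Finset ι) {k : ℕ}
    (f : ι → Fin k → ℝ) (u : Fin k → ℝ) :
    (∑ j ∈ s, f j) ⬝ᵥ u = ∑ j ∈ s, f j ⬝ᵥ u := by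
  simp only [dotProduct, Finset.sum_apply, Finset.sum_mul]
  exact Finset.sum_comm

theorem additive_schwarz_lower_bound (n : ℕ) (hn : 1 ≤ n) (J : ℕ)
    (A : Matrix (Fin n) (Fin n) ℝ) (hA : A.PosDef)
    (nl : Fin (J+1) → ℕ) (hnl : ∀ j, 1 ≤ nl j)
    (Rt : ∀ j : Fin (J+1), Matrix (Fin n) (Fin (nl j)) ℝ)
    (Aj : ∀ j : Fin (J+1), Matrix (Fin (nl j)) (Fin (nl j)) ℝ)
    (hAj : ∀ j, (Aj j).PosDef)
    (CV : ℝ) (hCV : 0 < CV)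
    (hstable : ∀ v : Fin n → ℝ, ∃ vj : ∀ j : Fin (J+1), Fin (nl j) → ℝ,
      v = ∑ j, (Rt j).mulVec (vj j) ∧
      ∑ j, vj j ⬝ᵥ (Aj j).mulVec (vj j) ≤ CV * (v ⬝ᵥ A.mulVec v)) :
    ∀ v : Fin n → ℝ,
      (1 / CV) * (v ⬝ᵥ A.mulVec v) ≤
        ((∑ j, Rt j * (Aj j)⁻¹ * (Rt j)ᵀ * A).mulVec v) ⬝ᵥ A.mulVec v := by
  intro v
  obtain ⟨vj, hdec, hbound⟩ := hstable v
  set u := A.mulVec v with hu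
  set w : ∀ j : Fin (J+1), Fin (nl j) → ℝ := fun j => (Rt j)ᵀ.mulVec u with hw
  set S := v ⬝ᵥ u with hS
  -- rewrite RHS as a sum of local quadratic forms
  have hpull : ∀ (j : Fin (J+1)) (p : Fin (nl j) → ℝ),
      ((Rt j).mulVec p) ⬝ᵥ u = p ⬝ᵥ w j := by
    intro j p
    rw [dotProduct_comm, Matrix.dotProduct_mulVec, ← Matrix.mulVec_transpose,
      dotProduct_comm]
  have hRHS : ((∑ j, Rt j * (Aj j)⁻¹ * (Rt j)ᵀ * A).mulVec v) ⬝ᵥ u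
      = ∑ j, w j ⬝ᵥ (Aj j)⁻¹.mulVec (w j) := by
    rw [sum_mulVec', sum_dotProduct']
    refine Finset.sum_congr rfl fun j _ => ?_
    have : (Rt j * (Aj j)⁻¹ * (Rt j)ᵀ * A).mulVec v
        = (Rt j).mulVec ((Aj j)⁻¹.mulVec (w j)) := by
      rw [hw, hu]
      simp only [← Matrix.mulVec_mulVec]
    rw [this, hpull j]
    exact dotProduct_comm _ _
  have hSsum : S = ∑ j, vj j ⬝ᵥ w j := by
    show v ⬝ᵥ u = _
    rw [hdec, sum_dotProduct']
    exact Finset.sum_congr rfl fun j _ => hpull j _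
  set T := ∑ j, w j ⬝ᵥ (Aj j)⁻¹.mulVec (w j) with hT
  have hcnn : ∀ j : Fin (J+1), 0 ≤ w j ⬝ᵥ (Aj j)⁻¹.mulVec (w j) := by
    intro j
    simpa using (hAj j).inv.posSemidef.dotProduct_mulVec_nonneg (w j)
  have hbnn : ∀ j : Fin (J+1), 0 ≤ vj j ⬝ᵥ (Aj j).mulVec (vj j) := by
    intro j
    simpa using (hAj j).posSemidef.dotProduct_mulVec_nonneg (vj j)
  have hTnn : 0 ≤ T := Finset.sum_nonneg fun j _ => hcnn j
  have hSnn : 0 ≤ S := by simpa using hA.posSemidef.dotProduct_mulVec_nonneg v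
  -- Cauchy-Schwarz chain
  have hCS : S ≤ Real.sqrt (∑ j, vj j ⬝ᵥ (Aj j).mulVec (vj j)) * Real.sqrt T := by
    rw [hSsum]
    have step1 : ∀ j : Fin (J+1), vj j ⬝ᵥ w j ≤
        Real.sqrt (vj j ⬝ᵥ (Aj j).mulVec (vj j)) *
        Real.sqrt (w j ⬝ᵥ (Aj j)⁻¹.mulVec (w j)) := by
      intro j
      rw [← Real.sqrt_mul (hbnn j)]
      calc vj j ⬝ᵥ w j ≤ |vj j ⬝ᵥ w j| := le_abs_self _
        _ = Real.sqrt ((vj j ⬝ᵥ w j) ^ 2) := (Real.sqrt_sq_eq_abs _).symm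
        _ ≤ _ := Real.sqrt_le_sqrt (matrix_cauchy_schwarz (Aj j) (hAj j) (vj j) (w j))
    calc ∑ j, vj j ⬝ᵥ w j
        ≤ ∑ j, Real.sqrt (vj j ⬝ᵥ (Aj j).mulVec (vj j)) *
            Real.sqrt (w j ⬝ᵥ (Aj j)⁻¹.mulVec (w j)) :=
          Finset.sum_le_sum fun j _ => step1 j
      _ ≤ _ := Real.sum_sqrt_mul_sqrt_le _ (fun j => hbnn j) (fun j => hcnn j)
  have hCS2 : S ≤ Real.sqrt (CV * S) * Real.sqrt T := by
    refine hCS.trans (mul_le_mul_of_nonneg_right ?_ (Real.sqrt_nonneg _))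
    exact Real.sqrt_le_sqrt hbound
  rw [← Real.sqrt_mul (by positivity)] at hCS2
  have hsq : S ^ 2 ≤ CV * S * T := by
    have := Real.sqrt_le_sqrt (le_of_eq (rfl : CV * S * T = CV * S * T))
    nlinarith [Real.sq_sqrt (show (0:ℝ) ≤ CV * S * T by positivity),
      Real.sqrt_nonneg (CV * S * T), hCS2, hSnn]
  rcases eq_or_lt_of_le hSnn with h0 | hpos
  · rw [hRHS, ← h0]
    simpa using hTnn
  · rw [hRHS]
    rw [div_mul_eq_mul_div, one_mul, div_le_iff₀ hCV]
    nlinarith [hpos]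
end

section
/- Assume the local stability property: there is ω ≥ 1 with ‖R_jᵀ w‖_A² ≤ ω · wᵀ A_j w for all w ∈ ℝ^{n_j} and all j = 0,…,J; and assume the strengthened Cauchy–Schwarz property: there is a symmetric matrix Θ = (θ_{ij})_{i,j=1}^J with nonnegative entries such that ⟨R_iᵀ u, R_jᵀ w⟩_A ≤ θ_{ij} ‖R_iᵀ u‖_A ‖R_jᵀ w‖_A for all u ∈ ℝ^{n_i}, w ∈ ℝ^{n_j} and all i,j = 1,…,J, and let ρ ≥ 0 be such that every eigenvalue of Θ is at most ρ in absolute value. Then the additive Schwarz operator satisfies the upper eigenvalue bound ⟨P_ad v, v⟩_A ≤ ω (ρ + 1) ‖v‖_A² for every v ∈ ℝ^n. -/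
open Matrix BigOperators


lemma asub_mulVec_dot {m k : ℕ} (M : Matrix (Fin m) (Fin k) ℝ) (w : Fin k → ℝ) (z : Fin m → ℝ) :
    (M *ᵥ w) ⬝ᵥ z = w ⬝ᵥ (Mᵀ *ᵥ z) := by
  rw [dotProduct_comm, Matrix.dotProduct_mulVec, ← Matrix.mulVec_transpose,
    dotProduct_comm]

lemma asub_cs {m : ℕ} {M : Matrix (Fin m) (Fin m) ℝ} (hM : M.PosSemidef) (x y : Fin m → ℝ) :
    x ⬝ᵥ M *ᵥ y ≤ Real.sqrt (x ⬝ᵥ M *ᵥ x) * Real.sqrt (y ⬝ᵥ M *ᵥ y) := by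
  have ht : Mᵀ = M := by
    rw [← Matrix.conjTranspose_eq_transpose_of_trivial]; exact hM.isHermitian
  have hsymm : ∀ a b : Fin m → ℝ, a ⬝ᵥ M *ᵥ b = b ⬝ᵥ M *ᵥ a := by
    intro a b
    rw [Matrix.dotProduct_mulVec, ← Matrix.mulVec_transpose, ht, dotProduct_comm]
  have hpos : ∀ a : Fin m → ℝ, 0 ≤ a ⬝ᵥ M *ᵥ a := fun a => by simpa using hM.dotProduct_mulVec_nonneg a
  have key : ∀ t : ℝ, 0 ≤ (y ⬝ᵥ M *ᵥ y) * (t * t) + (2 * (x ⬝ᵥ M *ᵥ y)) * t + (x ⬝ᵥ M *ᵥ x) := by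
    intro t
    have h0 := hpos (x + t • y)
    have hexp : (x + t • y) ⬝ᵥ M *ᵥ (x + t • y)
        = (y ⬝ᵥ M *ᵥ y) * (t * t) + (2 * (x ⬝ᵥ M *ᵥ y)) * t + (x ⬝ᵥ M *ᵥ x) := by
      rw [Matrix.mulVec_add, Matrix.mulVec_smul]
      simp only [add_dotProduct, smul_dotProduct, dotProduct_add,
        dotProduct_smul, smul_eq_mul]
      rw [hsymm y x]; ring
    linarith [hexp ▸ h0]
  have hd := discrim_le_zero key
  rw [discrim] at hd
  have hsq : (x ⬝ᵥ M *ᵥ y) ^ 2 ≤ (x ⬝ᵥ M *ᵥ x) * (y ⬝ᵥ M *ᵥ y) := by nlinarith [hd]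
  calc x ⬝ᵥ M *ᵥ y ≤ |x ⬝ᵥ M *ᵥ y| := le_abs_self _
    _ = Real.sqrt ((x ⬝ᵥ M *ᵥ y) ^ 2) := (Real.sqrt_sq_eq_abs _).symm
    _ ≤ Real.sqrt ((x ⬝ᵥ M *ᵥ x) * (y ⬝ᵥ M *ᵥ y)) := Real.sqrt_le_sqrt hsq
    _ = Real.sqrt (x ⬝ᵥ M *ᵥ x) * Real.sqrt (y ⬝ᵥ M *ᵥ y) := Real.sqrt_mul (hpos x) _


lemma asub_quad_bound {J : ℕ} (Θ : Matrix (Fin J) (Fin J) ℝ) (hΘsym : Θ.IsSymm) (ρ : ℝ)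
    (heig : ∀ μ : ℝ, Module.End.HasEigenvalue (Matrix.toLin' Θ) μ → |μ| ≤ ρ)
    (x : Fin J → ℝ) : x ⬝ᵥ Θ *ᵥ x ≤ ρ * (x ⬝ᵥ x) := by
  have hherm : Θ.IsHermitian := by
    rw [Matrix.IsHermitian]
    rw [Matrix.conjTranspose_eq_transpose_of_trivial]; exact hΘsym
  -- eigenvalues bounded
  have hev : ∀ i, hherm.eigenvalues i ≤ ρ := by
    intro i
    have hvec : Module.End.HasEigenvector (Matrix.toLin' Θ) (hherm.eigenvalues i)
        ⇑(hherm.eigenvectorBasis i) := by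
      constructor
      · rw [Module.End.mem_eigenspace_iff, Matrix.toLin'_apply]
        exact hherm.mulVec_eigenvectorBasis i
      · intro h
        have := hherm.eigenvectorBasis.orthonormal.ne_zero i
        apply this
        ext j
        exact congrFun h j
    have := heig _ (Module.End.hasEigenvalue_of_hasEigenvector hvec)
    exact (abs_le.mp this).2
  -- spectral theorem
  have hspec := hherm.spectral_theorem
  set U : Matrix (Fin J) (Fin J) ℝ := (hherm.eigenvectorUnitary : Matrix (Fin J) (Fin J) ℝ) with hU
  set y : Fin J → ℝ := Uᵀ *ᵥ x with hy
  have hstar : star U = Uᵀ := by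
    simp only [Matrix.star_eq_conjTranspose, Matrix.conjTranspose]
    ext i j
    simp
  have hUU : U * Uᵀ = 1 := by
    rw [← hstar]
    exact (Matrix.mem_unitaryGroup_iff).mp hherm.eigenvectorUnitary.2
  have h1 : x ⬝ᵥ Θ *ᵥ x = ∑ i, hherm.eigenvalues i * (y i * y i) := by
    conv_lhs => rw [hspec, Unitary.conjStarAlgAut_apply, ← hU, hstar]
    rw [← Matrix.mulVec_mulVec, ← Matrix.mulVec_mulVec, Matrix.dotProduct_mulVec,
      ← Matrix.mulVec_transpose]
    simp only [← hy, Matrix.mulVec_diagonal, dotProduct]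
    refine Finset.sum_congr rfl fun i _ => ?_
    simp [mul_comm, mul_assoc, mul_left_comm]
  have h2 : x ⬝ᵥ x = ∑ i, y i * y i := by
    have : y ⬝ᵥ y = x ⬝ᵥ x := by
      rw [hy, Matrix.dotProduct_mulVec, ← Matrix.mulVec_transpose, Matrix.transpose_transpose,
        Matrix.mulVec_mulVec, hUU, Matrix.one_mulVec]
    rw [← this]; rfl
  rw [h1, h2, Finset.mul_sum]
  refine Finset.sum_le_sum fun i _ => ?_
  have : 0 ≤ y i * y i := mul_self_nonneg _
  exact mul_le_mul_of_nonneg_right (hev i) this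

lemma asub_helper (c d : ℝ) (hc : 0 ≤ c) (hd : 0 ≤ d) (h : c ^ 2 ≤ d * c) : c ≤ d := by
  rcases eq_or_lt_of_le hc with h0 | h0
  · linarith
  · nlinarith

theorem additive_schwarz_upper_bound (n : ℕ) (hn : 1 ≤ n) (J : ℕ)
    (A : Matrix (Fin n) (Fin n) ℝ) (hA : A.PosDef)
    (nl : Fin (J+1) → ℕ) (hnl : ∀ j, 1 ≤ nl j)
    (Rt : ∀ j : Fin (J+1), Matrix (Fin n) (Fin (nl j)) ℝ)
    (Aj : ∀ j : Fin (J+1), Matrix (Fin (nl j)) (Fin (nl j)) ℝ)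
    (hAj : ∀ j, (Aj j).PosDef)
    (ω : ℝ) (hω : 1 ≤ ω)
    (hloc : ∀ (j : Fin (J+1)) (w : Fin (nl j) → ℝ),
      ((Rt j).mulVec w) ⬝ᵥ A.mulVec ((Rt j).mulVec w) ≤ ω * (w ⬝ᵥ (Aj j).mulVec w))
    (Θ : Matrix (Fin J) (Fin J) ℝ) (hΘsym : Θ.IsSymm) (hΘpos : ∀ i j, 0 ≤ Θ i j)
    (hCS : ∀ (i j : Fin J) (u : Fin (nl i.succ) → ℝ) (w : Fin (nl j.succ) → ℝ),
      ((Rt i.succ).mulVec u) ⬝ᵥ A.mulVec ((Rt j.succ).mulVec w) ≤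
        Θ i j * Real.sqrt (((Rt i.succ).mulVec u) ⬝ᵥ A.mulVec ((Rt i.succ).mulVec u)) *
          Real.sqrt (((Rt j.succ).mulVec w) ⬝ᵥ A.mulVec ((Rt j.succ).mulVec w)))
    (ρ : ℝ) (hρ : 0 ≤ ρ)
    (heig : ∀ μ : ℝ, Module.End.HasEigenvalue (Matrix.toLin' Θ) μ → |μ| ≤ ρ) :
    ∀ v : Fin n → ℝ,
      ((∑ j, Rt j * (Aj j)⁻¹ * (Rt j)ᵀ * A).mulVec v) ⬝ᵥ A.mulVec v ≤
        ω * (ρ + 1) * (v ⬝ᵥ A.mulVec v) := by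
  intro v
  set w : ∀ j : Fin (J+1), Fin (nl j) → ℝ :=
    fun j => (Aj j)⁻¹ *ᵥ ((Rt j)ᵀ *ᵥ (A *ᵥ v)) with hw
  set t : Fin (J+1) → (Fin n → ℝ) := fun j => (Rt j) *ᵥ w j with htdef
  have hvAv : 0 ≤ v ⬝ᵥ A *ᵥ v := by simpa using hA.posSemidef.dotProduct_mulVec_nonneg v
  -- LHS rewriting
  have hLHS : ((∑ j, Rt j * (Aj j)⁻¹ * (Rt j)ᵀ * A) *ᵥ v) ⬝ᵥ (A *ᵥ v)
      = ∑ j, (t j) ⬝ᵥ (A *ᵥ v) := by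
    have hs : (∑ j, Rt j * (Aj j)⁻¹ * (Rt j)ᵀ * A) *ᵥ v = ∑ j, t j := by
      ext i
      simp only [Matrix.mulVec, dotProduct, Matrix.sum_apply, Finset.sum_apply,
        Finset.sum_mul]
      rw [Finset.sum_comm]
      refine Finset.sum_congr rfl fun j _ => ?_
      have : (Rt j * (Aj j)⁻¹ * (Rt j)ᵀ * A) *ᵥ v = t j := by
        rw [htdef, hw]
        simp only [← Matrix.mulVec_mulVec]
      calc ∑ k, (Rt j * (Aj j)⁻¹ * (Rt j)ᵀ * A) i k * v k
          = ((Rt j * (Aj j)⁻¹ * (Rt j)ᵀ * A) *ᵥ v) i := rfl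
        _ = t j i := by rw [this]
    rw [hs]
    simp only [dotProduct, Finset.sum_apply, Finset.sum_mul]
    rw [Finset.sum_comm]
  have hAjw : ∀ j, (Aj j) *ᵥ (w j) = (Rt j)ᵀ *ᵥ (A *ᵥ v) := by
    intro j
    rw [hw]
    rw [Matrix.mulVec_mulVec, Matrix.mul_nonsing_inv _ (isUnit_iff_ne_zero.mpr (hAj j).det_pos.ne'),
      Matrix.one_mulVec]
  have hcw : ∀ j, t j ⬝ᵥ (A *ᵥ v) = w j ⬝ᵥ (Aj j) *ᵥ (w j) := by
    intro j
    rw [hAjw j, htdef]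
    exact asub_mulVec_dot (Rt j) (w j) (A *ᵥ v)
  have hc0 : ∀ j, 0 ≤ t j ⬝ᵥ (A *ᵥ v) := by
    intro j
    rw [hcw j]
    simpa using (hAj j).posSemidef.dotProduct_mulVec_nonneg (w j)
  have hnorm : ∀ j, t j ⬝ᵥ A *ᵥ (t j) ≤ ω * (t j ⬝ᵥ (A *ᵥ v)) := by
    intro j
    rw [hcw j]
    exact hloc j (w j)
  have htA0 : ∀ j, 0 ≤ t j ⬝ᵥ A *ᵥ t j := fun j => by simpa using hA.posSemidef.dotProduct_mulVec_nonneg (t j)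
  -- generic bootstrapping bound
  have hbound : ∀ (u : Fin n → ℝ) (K : ℝ), 0 ≤ K → 0 ≤ u ⬝ᵥ (A *ᵥ v) →
      u ⬝ᵥ A *ᵥ u ≤ K * (u ⬝ᵥ (A *ᵥ v)) → u ⬝ᵥ (A *ᵥ v) ≤ K * (v ⬝ᵥ A *ᵥ v) := by
    intro u K hK hcu hKu
    set c : ℝ := u ⬝ᵥ (A *ᵥ v) with hcdef
    have h1 : c ≤ Real.sqrt (u ⬝ᵥ A *ᵥ u) * Real.sqrt (v ⬝ᵥ A *ᵥ v) :=
      asub_cs hA.posSemidef u v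
    have h2 : Real.sqrt (u ⬝ᵥ A *ᵥ u) ≤ Real.sqrt (K * c) := Real.sqrt_le_sqrt hKu
    have h3 : c ≤ Real.sqrt (K * c) * Real.sqrt (v ⬝ᵥ A *ᵥ v) :=
      h1.trans (mul_le_mul_of_nonneg_right h2 (Real.sqrt_nonneg _))
    have hKc : 0 ≤ K * c := mul_nonneg hK hcu
    have h4 : c ^ 2 ≤ (K * c) * (v ⬝ᵥ A *ᵥ v) := by
      nlinarith [Real.sq_sqrt hKc, Real.sq_sqrt hvAv, Real.sqrt_nonneg (K * c),
        Real.sqrt_nonneg (v ⬝ᵥ A *ᵥ v), h3]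
    refine asub_helper c (K * (v ⬝ᵥ A *ᵥ v)) hcu (mul_nonneg hK hvAv) ?_
    nlinarith [h4]
  -- part 1 : the j = 0 term
  have h0 : t 0 ⬝ᵥ (A *ᵥ v) ≤ ω * (v ⬝ᵥ A *ᵥ v) :=
    hbound (t 0) ω (by linarith) (hc0 0) (hnorm 0)
  -- part 2 : the j ≥ 1 terms
  set S : Fin n → ℝ := ∑ i : Fin J, t i.succ with hSdef
  set σ : ℝ := ∑ i : Fin J, t i.succ ⬝ᵥ (A *ᵥ v) with hσdef
  have hσ0 : 0 ≤ σ := Finset.sum_nonneg fun i _ => hc0 i.succ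
  have hSv : S ⬝ᵥ (A *ᵥ v) = σ := by
    rw [hSdef, hσdef]
    simp only [dotProduct, Finset.sum_apply, Finset.sum_mul]
    rw [Finset.sum_comm]
  set x : Fin J → ℝ := fun i => Real.sqrt (t i.succ ⬝ᵥ A *ᵥ t i.succ) with hxdef
  have hdd : ∀ u : Fin n → ℝ, u ⬝ᵥ A *ᵥ S = ∑ j : Fin J, u ⬝ᵥ A *ᵥ t j.succ := by
    intro u
    have hAS : A *ᵥ S = ∑ j : Fin J, A *ᵥ t j.succ := by
      rw [hSdef]
      ext i
      simp only [Matrix.mulVec, dotProduct, Finset.sum_apply, Finset.mul_sum]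
      rw [Finset.sum_comm]
    rw [hAS]
    simp only [dotProduct, Finset.sum_apply, Finset.mul_sum]
    rw [Finset.sum_comm]
  have hSS : S ⬝ᵥ A *ᵥ S ≤ ρ * (ω * σ) := by
    have e1 : S ⬝ᵥ A *ᵥ S = ∑ i : Fin J, ∑ j : Fin J, t i.succ ⬝ᵥ A *ᵥ t j.succ := by
      have : S ⬝ᵥ (A *ᵥ S) = ∑ i : Fin J, t i.succ ⬝ᵥ (A *ᵥ S) := by
        rw [hSdef]
        simp only [dotProduct, Finset.sum_apply, Finset.sum_mul]
        rw [Finset.sum_comm]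
      rw [this]
      exact Finset.sum_congr rfl fun i _ => hdd (t i.succ)
    have e2 : ∑ i : Fin J, ∑ j : Fin J, t i.succ ⬝ᵥ A *ᵥ t j.succ
        ≤ ∑ i : Fin J, ∑ j : Fin J, Θ i j * x i * x j := by
      refine Finset.sum_le_sum fun i _ => Finset.sum_le_sum fun j _ => ?_
      exact hCS i j (w i.succ) (w j.succ)
    have e3 : ∑ i : Fin J, ∑ j : Fin J, Θ i j * x i * x j = x ⬝ᵥ Θ *ᵥ x := by
      simp only [dotProduct, Matrix.mulVec, Finset.mul_sum]
      refine Finset.sum_congr rfl fun i _ => Finset.sum_congr rfl fun j _ => ?_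
      ring
    have e4 : x ⬝ᵥ Θ *ᵥ x ≤ ρ * (x ⬝ᵥ x) := asub_quad_bound Θ hΘsym ρ heig x
    have e5 : x ⬝ᵥ x ≤ ω * σ := by
      have : x ⬝ᵥ x = ∑ i : Fin J, t i.succ ⬝ᵥ A *ᵥ t i.succ := by
        simp only [dotProduct, hxdef]
        exact Finset.sum_congr rfl fun i _ => Real.mul_self_sqrt (htA0 i.succ)
      rw [this, hσdef, Finset.mul_sum]
      exact Finset.sum_le_sum fun i _ => hnorm i.succ
    calc S ⬝ᵥ A *ᵥ S = ∑ i : Fin J, ∑ j : Fin J, t i.succ ⬝ᵥ A *ᵥ t j.succ := e1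
      _ ≤ x ⬝ᵥ Θ *ᵥ x := e3 ▸ e2
      _ ≤ ρ * (x ⬝ᵥ x) := e4
      _ ≤ ρ * (ω * σ) := mul_le_mul_of_nonneg_left e5 hρ
  have hσb : σ ≤ (ρ * ω) * (v ⬝ᵥ A *ᵥ v) := by
    have := hbound S (ρ * ω) (mul_nonneg hρ (by linarith)) (hSv ▸ hσ0) ?_
    · rwa [hSv] at this
    · rw [hSv]
      calc S ⬝ᵥ A *ᵥ S ≤ ρ * (ω * σ) := hSS
        _ = ρ * ω * σ := by ring
  -- conclusion
  rw [hLHS, Fin.sum_univ_succ]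
  have hfin : ω * (ρ + 1) * (v ⬝ᵥ A *ᵥ v)
      = ω * (v ⬝ᵥ A *ᵥ v) + ρ * ω * (v ⬝ᵥ A *ᵥ v) := by ring
  rw [hfin]
  exact add_le_add h0 (hσdef ▸ hσb)
end

section
/- Let a be a symmetric positive semidefinite bilinear form on a real vector space V, let u_1,…,u_J ∈ V, let Θ = (θ_{ij}) ∈ ℝ^{J×J} be a symmetric matrix with nonnegative entries such that a(u_i, u_j) ≤ θ_{ij} · a(u_i,u_i)^{1/2} · a(u_j,u_j)^{1/2} for all i,j, and let ρ ≥ 0 be such that every eigenvalue of Θ is at most ρ in absolute value. Then a(∑_{i=1}^J u_i, ∑_{i=1}^J u_i) ≤ ρ · ∑_{i=1}^J a(u_i, u_i). -/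
open Matrix BigOperators Pointwise

theorem strengthened_cauchy_schwarz_sum_bound (V : Type*) [AddCommGroup V] [Module ℝ V]
    (a : V →ₗ[ℝ] V →ₗ[ℝ] ℝ)
    (hsym : ∀ u v : V, a u v = a v u)
    (hpsd : ∀ v : V, 0 ≤ a v v)
    (J : ℕ) (u : Fin J → V)
    (Θ : Matrix (Fin J) (Fin J) ℝ) (hΘsym : Θ.IsSymm) (hΘpos : ∀ i j, 0 ≤ Θ i j)
    (hCS : ∀ i j : Fin J, a (u i) (u j) ≤
      Θ i j * Real.sqrt (a (u i) (u i)) * Real.sqrt (a (u j) (u j)))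
    (ρ : ℝ) (hρ : 0 ≤ ρ)
    (heig : ∀ μ : ℝ, Module.End.HasEigenvalue (Matrix.toLin' Θ) μ → |μ| ≤ ρ) :
    a (∑ i, u i) (∑ i, u i) ≤ ρ * ∑ i, a (u i) (u i) := by
  classical
  -- translate the eigenvalue hypothesis to a spectrum statement
  have hspec : ∀ μ : ℝ, μ ∈ spectrum ℝ Θ → |μ| ≤ ρ := by
    intro μ hμ
    apply heig
    rw [Module.End.hasEigenvalue_iff_mem_spectrum]
    rwa [← AlgEquiv.spectrum_eq (Matrix.toLinAlgEquiv' (R := ℝ) (n := Fin J)) Θ] at hμ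
  have hH : Θ.IsHermitian := by
    rw [Matrix.IsHermitian, Matrix.conjTranspose]
    exact hΘsym.eq
  -- the matrix ρ•1 - Θ is positive semidefinite
  set M : Matrix (Fin J) (Fin J) ℝ := ρ • (1 : Matrix (Fin J) (Fin J) ℝ) - Θ with hM
  have hMH : M.IsHermitian := by
    ext i j
    simp [hM, Matrix.one_apply, hΘsym.apply, Matrix.IsSymm.apply hΘsym, eq_comm]
  have hMpsd : M.PosSemidef := by
    apply hMH.posSemidef_iff_eigenvalues_nonneg.mpr
    intro i
    have h1 : hMH.eigenvalues i ∈ spectrum ℝ M := by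
      simpa using hMH.eigenvalues_mem_spectrum_real i
    have h2 : ρ - hMH.eigenvalues i ∈ spectrum ℝ Θ := by
      have : M = (algebraMap ℝ (Matrix (Fin J) (Fin J) ℝ)) ρ - Θ := by
        rw [hM]; congr 1; simp [Algebra.algebraMap_eq_smul_one]
      have h1' : hMH.eigenvalues i ∈ ({ρ} : Set ℝ) - spectrum ℝ Θ := by
        rw [spectrum.singleton_sub_eq, ← this]; exact h1
      obtain ⟨r, hr, y, hy, hxy⟩ := h1'
      simp only [Set.mem_singleton_iff] at hr
      simp only [hr] at hxy
      have hyv : y = ρ - hMH.eigenvalues i := by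
        have : ρ - y = hMH.eigenvalues i := hxy
        linarith
      rwa [← hyv]
    have := hspec _ h2
    have := abs_le.mp this
    exact (by linarith [this.2] : (0:ℝ) ≤ hMH.eigenvalues i)
  -- quadratic form bound: ∀ x, x ⬝ᵥ Θ *ᵥ x ≤ ρ * ∑ x i ^ 2
  set x : Fin J → ℝ := fun i => Real.sqrt (a (u i) (u i)) with hx
  have hquad : x ⬝ᵥ (Θ *ᵥ x) ≤ ρ * ∑ i, x i ^ 2 := by
    have h0 := hMpsd.dotProduct_mulVec_nonneg x
    have hstar : star x = x := rfl
    rw [hstar, hM, Matrix.sub_mulVec, Matrix.smul_mulVec, Matrix.one_mulVec,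
      dotProduct_sub, dotProduct_smul] at h0
    have hdot : x ⬝ᵥ x = ∑ i, x i ^ 2 := by
      simp [dotProduct, pow_two]
    rw [hdot] at h0
    simp only [smul_eq_mul] at h0
    linarith
  -- expand the bilinear form over the sums
  have hexp : a (∑ i, u i) (∑ i, u i) = ∑ i, ∑ j, a (u i) (u j) := by
    simp only [map_sum, LinearMap.coe_sum, Finset.sum_apply]
    exact Finset.sum_comm
  rw [hexp]
  have hsq : ∀ i, x i ^ 2 = a (u i) (u i) := fun i => Real.sq_sqrt (hpsd (u i))
  calc ∑ i, ∑ j, a (u i) (u j) ≤ ∑ i, ∑ j, Θ i j * x i * x j := by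
        apply Finset.sum_le_sum; intro i _
        apply Finset.sum_le_sum; intro j _
        exact hCS i j
    _ = x ⬝ᵥ (Θ *ᵥ x) := by
        simp only [dotProduct, Matrix.mulVec, dotProduct, Finset.mul_sum]
        apply Finset.sum_congr rfl; intro i _
        apply Finset.sum_congr rfl; intro j _
        ring
    _ ≤ ρ * ∑ i, x i ^ 2 := hquad
    _ = ρ * ∑ i, a (u i) (u i) := by rw [Finset.sum_congr rfl fun i _ => hsq i]
end
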